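/- Let D = (V,E) be a time-invariant digraph and f ∈ [0,1/2], and suppose S_1, S_2 ⊂ V are nonempty, disjoint sets, neither of which is f-fraction edge reachable. Let a < b and consider any Carathéodory solution of the dynamics in which every agent updates according to ARC-P with parameter f (all agents behaving normally), with initial values x_i(0) = a for i ∈ S_1, x_i(0) = b for i ∈ S_2, and x_i(0) ∈ [a,b] for all other i. Then x_i(t) = a for all i ∈ S_1 and x_i(t) = b for all i ∈ S_2 and all t ≥ 0; in particular, the agents do not reach asymptotic consensus. -/

import Mathlib

open Finset Filter Topology MeasureTheory

namespace ARCP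

variable {n : ℕ}

/-- `R` is a valid ARC-P removal of the (up to) `F` largest neighboring values. -/
def RemovalHigh (Nin : Finset (Fin n)) (v : Fin n → ℝ) (xi : ℝ) (F : ℕ)
    (R : Finset (Fin n)) : Prop :=
  R ⊆ Nin ∧
    (((Nin.filter fun j => xi < v j).card < F ∧ R = Nin.filter fun j => xi < v j) ∨
      (F ≤ (Nin.filter fun j => xi < v j).card ∧ R.card = F ∧
        ∀ j ∈ R, ∀ k ∈ Nin \ R, v k ≤ v j))

/-- `R` is a valid ARC-P removal of the (up to) `F` smallest neighboring values. -/
def RemovalLow (Nin : Finset (Fin n)) (v : Fin n → ℝ) (xi : ℝ) (F : ℕ)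
    (R : Finset (Fin n)) : Prop :=
  R ⊆ Nin ∧
    (((Nin.filter fun j => v j < xi).card < F ∧ R = Nin.filter fun j => v j < xi) ∨
      (F ≤ (Nin.filter fun j => v j < xi).card ∧ R.card = F ∧
        ∀ j ∈ R, ∀ k ∈ Nin \ R, v j ≤ v k))

/-- `R` is a valid set of in-neighbors removed by the ARC-P rule with threshold `F`. -/
def IsARCPRemoval (Nin : Finset (Fin n)) (v : Fin n → ℝ) (xi : ℝ) (F : ℕ)
    (R : Finset (Fin n)) : Prop :=
  ∃ Rhi Rlo : Finset (Fin n),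
    R = Rhi ∪ Rlo ∧ RemovalHigh Nin v xi F Rhi ∧ RemovalLow Nin v xi F Rlo

/-- The ARC-P control input: `∑_{j ∈ Nin \ R} w j * (v j - xi)`. -/
def arcpUpdate (Nin R : Finset (Fin n)) (w : Fin n → ℝ) (v : Fin n → ℝ) (xi : ℝ) : ℝ :=
  ∑ j ∈ Nin \ R, w j * (v j - xi)

/-- `S` is a `p`-fraction edge reachable set of the digraph with in-neighborhoods `Nin`. -/
def FracEdgeReachable (Nin : Fin n → Finset (Fin n)) (p : ℝ) (S : Finset (Fin n)) : Prop :=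
  (∃ i ∈ S, 0 < (Nin i).card ∧ ⌈p * (((Nin i).card : ℝ))⌉₊ ≤ ((Nin i) \ S).card) ∨
    (p = 0 ∧ ∀ i ∈ S, ((Nin i) \ S).card = 0)

end ARCP

namespace ARCP

variable {n : ℕ}

/-- RemovalLow is RemovalHigh for negated values. -/
lemma RemovalLow.neg {Nin : Finset (Fin n)} {v : Fin n → ℝ} {xi : ℝ} {F : ℕ}
    {R : Finset (Fin n)} (h : RemovalLow Nin v xi F R) :
    RemovalHigh Nin (fun j => -v j) (-xi) F R := by
  obtain ⟨hsub, h⟩ := h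
  refine ⟨hsub, ?_⟩
  have hfilt : (Nin.filter fun j => -xi < -(v j)) = Nin.filter fun j => v j < xi := by
    apply Finset.filter_congr; intro j _; simp
  rcases h with ⟨h1, h2⟩ | ⟨h1, h2, h3⟩
  · exact Or.inl ⟨by rwa [hfilt], by rwa [hfilt]⟩
  · exact Or.inr ⟨by rwa [hfilt], h2, fun j hj k hk => neg_le_neg (h3 j hj k hk)⟩

/-- Simple termwise bound with no removal structure needed. -/
lemma simple_high {β : ℝ} (hβ : 0 ≤ β) (kept : Finset (Fin n)) (v : Fin n → ℝ)
    {xi c : ℝ} (hxi : c ≤ xi) (w' : Fin n → ℝ) (hw' : ∀ j ∈ kept, 0 ≤ w' j ∧ w' j ≤ β) :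
    ∑ j ∈ kept, w' j * (v j - xi) ≤ β * ∑ j : Fin n, max (v j - c) 0 := by
  calc ∑ j ∈ kept, w' j * (v j - xi) ≤ ∑ j ∈ kept, β * max (v j - c) 0 := by
        apply Finset.sum_le_sum; intro j hj
        rcases le_or_gt (v j) xi with h | h
        · have : w' j * (v j - xi) ≤ 0 :=
            mul_nonpos_of_nonneg_of_nonpos (hw' j hj).1 (by linarith)
          exact this.trans (mul_nonneg hβ (le_max_right _ _))
        · have h1 : w' j * (v j - xi) ≤ β * (v j - xi) :=
            mul_le_mul_of_nonneg_right (hw' j hj).2 (by linarith)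
          have h2 : β * (v j - xi) ≤ β * max (v j - c) 0 :=
            mul_le_mul_of_nonneg_left (le_trans (by linarith) (le_max_left _ _)) hβ
          linarith
    _ ≤ ∑ j : Fin n, β * max (v j - c) 0 := by
        apply Finset.sum_le_sum_of_subset_of_nonneg (Finset.subset_univ _)
        intro j _ _; exact mul_nonneg hβ (le_max_right _ _)
    _ = β * ∑ j : Fin n, max (v j - c) 0 := by rw [Finset.mul_sum]

/-- Key combinatorial bound: if `i ∈ S` with few outside neighbors, values above `xi`
kept by the high-removal are dominated by removed `S`-values. -/
lemma key_high {β : ℝ} (hβ : 0 ≤ β) {Nin kept Rhi S : Finset (Fin n)} {v : Fin n → ℝ}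
    {xi a : ℝ} {F : ℕ}
    (hkept : kept ⊆ Nin \ Rhi)
    (hout : (Nin \ S).card ≤ F)
    (hxi : a < xi)
    (hRhi : RemovalHigh Nin v xi F Rhi)
    (w' : Fin n → ℝ) (hw' : ∀ j ∈ kept, 0 ≤ w' j ∧ w' j ≤ β) :
    ∑ j ∈ kept, w' j * (v j - xi) ≤
      β * ((n : ℝ) + 1) * ∑ r ∈ S, max (v r - a) 0 := by
  set W := ∑ r ∈ S, max (v r - a) 0 with hW
  have hWnn : 0 ≤ W := Finset.sum_nonneg fun r _ => le_max_right _ _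
  -- termwise bound by β * pos part
  have step1 : ∑ j ∈ kept, w' j * (v j - xi) ≤ ∑ j ∈ kept, β * max (v j - xi) 0 := by
    apply Finset.sum_le_sum; intro j hj
    rcases le_or_gt (v j) xi with h | h
    · exact le_trans (mul_nonpos_of_nonneg_of_nonpos (hw' j hj).1 (by linarith))
        (mul_nonneg hβ (le_max_right _ _))
    · have h1 : w' j * (v j - xi) ≤ β * (v j - xi) :=
        mul_le_mul_of_nonneg_right (hw' j hj).2 (by linarith)
      have : (v j - xi) ≤ max (v j - xi) 0 := le_max_left _ _
      nlinarith
  -- split kept into S-part and non-S part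
  have split : ∑ j ∈ kept, β * max (v j - xi) 0 =
      ∑ j ∈ kept ∩ S, β * max (v j - xi) 0 + ∑ j ∈ kept \ S, β * max (v j - xi) 0 := by
    rw [← Finset.sum_inter_add_sum_sdiff]
  have hSpart : ∑ j ∈ kept ∩ S, β * max (v j - xi) 0 ≤ β * W := by
    rw [hW, Finset.mul_sum]
    calc ∑ j ∈ kept ∩ S, β * max (v j - xi) 0
        ≤ ∑ j ∈ kept ∩ S, β * max (v j - a) 0 := by
          apply Finset.sum_le_sum; intro j _
          exact mul_le_mul_of_nonneg_left
            (max_le_max (by linarith) le_rfl) hβ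
      _ ≤ ∑ j ∈ S, β * max (v j - a) 0 := by
          apply Finset.sum_le_sum_of_subset_of_nonneg Finset.inter_subset_right
          intro j _ _; exact mul_nonneg hβ (le_max_right _ _)
  -- non-S part
  have hkeptNin : kept ⊆ Nin := hkept.trans Finset.sdiff_subset
  have hNSpart : ∑ j ∈ kept \ S, β * max (v j - xi) 0 ≤ β * ((n : ℝ) * W) := by
    obtain ⟨hRsub, hcase⟩ := hRhi
    rcases hcase with ⟨hlt, hEq⟩ | ⟨hF, hcard, hdom⟩
    · -- all strictly-larger removed: kept values are ≤ xi
      have hz : ∀ j ∈ kept \ S, β * max (v j - xi) 0 = 0 := by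
        intro j hj
        have hj' := Finset.mem_sdiff.1 hj
        have hjk := hkept hj'.1
        have hjNin := (Finset.mem_sdiff.1 hjk).1
        have hjR := (Finset.mem_sdiff.1 hjk).2
        have : ¬ xi < v j := by
          intro hlt'
          exact hjR (hEq ▸ Finset.mem_filter.2 ⟨hjNin, hlt'⟩)
        have : max (v j - xi) 0 = 0 := max_eq_right (by push_neg at this; linarith)
        rw [this, mul_zero]
      rw [Finset.sum_eq_zero hz]
      positivity
    · -- exactly F largest removed
      set K := (kept \ S).filter (fun j => xi < v j) with hK
      have hKsum : ∑ j ∈ kept \ S, β * max (v j - xi) 0 = ∑ j ∈ K, β * max (v j - xi) 0 := by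
        rw [hK]
        rw [← Finset.sum_filter_add_sum_filter_not (kept \ S) (fun j => xi < v j)]
        have : ∑ j ∈ (kept \ S).filter (fun j => ¬ xi < v j), β * max (v j - xi) 0 = 0 := by
          apply Finset.sum_eq_zero; intro j hj
          have := (Finset.mem_filter.1 hj).2
          rw [max_eq_right (by push_neg at this; linarith), mul_zero]
        rw [this, add_zero]
      rw [hKsum]
      -- |K| ≤ |Rhi ∩ S|
      have hKout : K ⊆ (Nin \ S) := by
        intro j hj
        have hj1 := Finset.mem_sdiff.1 (Finset.mem_filter.1 hj).1
        exact Finset.mem_sdiff.2 ⟨hkeptNin hj1.1, hj1.2⟩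
      have hKdisj : Disjoint K Rhi := by
        apply Finset.disjoint_left.2
        intro j hj hjR
        have hj1 := (Finset.mem_sdiff.1 (Finset.mem_filter.1 hj).1).1
        exact (Finset.mem_sdiff.1 (hkept hj1)).2 hjR
      have hcard1 : K.card + (Rhi \ S).card ≤ (Nin \ S).card := by
        have hsub : K ∪ (Rhi \ S) ⊆ Nin \ S := by
          apply Finset.union_subset hKout
          intro j hj
          have hj1 := Finset.mem_sdiff.1 hj
          exact Finset.mem_sdiff.2 ⟨hRsub hj1.1, hj1.2⟩
        calc K.card + (Rhi \ S).card = (K ∪ (Rhi \ S)).card := by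
              rw [Finset.card_union_of_disjoint
                (hKdisj.mono_right Finset.sdiff_subset)]
          _ ≤ (Nin \ S).card := Finset.card_le_card hsub
      have hcard2 : K.card ≤ (Rhi ∩ S).card := by
        have h3 : (Rhi ∩ S).card + (Rhi \ S).card = Rhi.card := by
          rw [Finset.card_inter_add_card_sdiff]
        omega
      -- each K-term ≤ W
      have hterm : ∀ j ∈ K, β * max (v j - xi) 0 ≤ β * W := by
        intro j hj
        have hKne : (Rhi ∩ S).Nonempty := by
          rw [← Finset.card_pos]
          have : 0 < K.card := Finset.card_pos.2 ⟨j, hj⟩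
          omega
        obtain ⟨r, hr⟩ := hKne
        have hrR := (Finset.mem_inter.1 hr).1
        have hrS := (Finset.mem_inter.1 hr).2
        have hjlt := (Finset.mem_filter.1 hj).2
        have hjkept := (Finset.mem_sdiff.1 (Finset.mem_filter.1 hj).1).1
        have hdomj : v j ≤ v r := hdom r hrR j (hkept hjkept)
        have h5 : max (v j - xi) 0 ≤ max (v r - a) 0 := by
          apply max_le _ (le_max_right _ _)
          exact le_trans (by linarith) (le_max_left _ _)
        have h6 : max (v r - a) 0 ≤ W := by
          rw [hW]
          exact Finset.single_le_sum (f := fun r => max (v r - a) 0) (fun r _ => le_max_right _ _) hrS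
        exact mul_le_mul_of_nonneg_left (h5.trans h6) hβ
      calc ∑ j ∈ K, β * max (v j - xi) 0 ≤ ∑ _j ∈ K, β * W :=
            Finset.sum_le_sum hterm
        _ = (K.card : ℝ) * (β * W) := by rw [Finset.sum_const, nsmul_eq_mul]
        _ ≤ (n : ℝ) * (β * W) := by
            apply mul_le_mul_of_nonneg_right _ (mul_nonneg hβ hWnn)
            exact_mod_cast Finset.card_le_univ K |>.trans (le_of_eq (Finset.card_univ.trans (Fintype.card_fin n)))
        _ = β * ((n : ℝ) * W) := by ring
  calc ∑ j ∈ kept, w' j * (v j - xi)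
      ≤ ∑ j ∈ kept, β * max (v j - xi) 0 := step1
    _ = _ := split
    _ ≤ β * W + β * ((n : ℝ) * W) := add_le_add hSpart hNSpart
    _ = β * ((n : ℝ) + 1) * W := by ring

/-- Crossing lemma: if `y 0 ≤ c` and whenever `y s > c` the "derivative" is bounded
by `C * V s`, then `(y t - c)⁺ ≤ C * ∫₀ᵗ V`. -/
lemma cross {V u y : ℝ → ℝ} {c C t : ℝ} (ht : 0 ≤ t) (hC : 0 ≤ C)
    (hy : ContinuousOn y (Set.Icc 0 t)) (hVnn : ∀ s, 0 ≤ V s)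
    (hVint : IntervalIntegrable V volume 0 t)
    (hu : IntervalIntegrable u volume 0 t)
    (hsol : ∀ s ∈ Set.Icc (0:ℝ) t, y s = y 0 + ∫ r in (0:ℝ)..s, u r)
    (h0 : y 0 ≤ c)
    (hbd : ∀ s ∈ Set.Icc (0:ℝ) t, c < y s → u s ≤ C * V s) :
    max (y t - c) 0 ≤ C * ∫ s in (0:ℝ)..t, V s := by
  have hInn : 0 ≤ ∫ s in (0:ℝ)..t, V s :=
    intervalIntegral.integral_nonneg ht (fun s _ => hVnn s)
  have hRHS : 0 ≤ C * ∫ s in (0:ℝ)..t, V s := mul_nonneg hC hInn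
  rcases le_or_gt (y t) c with hyt | hyt
  · exact max_le (by linarith) hRHS
  -- crossing point
  have h0mem : (0:ℝ) ∈ Set.Icc 0 t := ⟨le_rfl, ht⟩
  set E : Set ℝ := Set.Icc 0 t ∩ y ⁻¹' (Set.Iic c) with hE
  have hEne : E.Nonempty := ⟨0, h0mem, h0⟩
  have hEcl : IsClosed E := hy.preimage_isClosed_of_isClosed isClosed_Icc isClosed_Iic
  have hEcp : IsCompact E := isCompact_Icc.of_isClosed_subset hEcl Set.inter_subset_left
  set s₀ := sSup E with hs₀
  have hs₀mem : s₀ ∈ E := hEcp.sSup_mem hEne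
  have hs₀Icc : s₀ ∈ Set.Icc 0 t := hs₀mem.1
  have hys₀ : y s₀ ≤ c := hs₀mem.2
  have hs₀t : s₀ < t := lt_of_le_of_ne hs₀Icc.2 (fun h => by rw [h] at hys₀; linarith)
  have habove : ∀ s ∈ Set.Ioc s₀ t, c < y s := by
    intro s hs
    by_contra h
    push_neg at h
    have : s ∈ E := ⟨⟨hs₀Icc.1.trans hs.1.le, hs.2⟩, h⟩
    have := le_csSup hEcp.bddAbove this
    exact absurd this (not_le.2 hs.1)
  -- split the integrals
  have hu1 : IntervalIntegrable u volume 0 s₀ :=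
    hu.mono_set (by rw [Set.uIcc_of_le hs₀Icc.1, Set.uIcc_of_le ht]; exact Set.Icc_subset_Icc le_rfl hs₀Icc.2)
  have hu2 : IntervalIntegrable u volume s₀ t :=
    hu.mono_set (by rw [Set.uIcc_of_le hs₀t.le, Set.uIcc_of_le ht]; exact Set.Icc_subset_Icc hs₀Icc.1 le_rfl)
  have hV1 : IntervalIntegrable V volume 0 s₀ :=
    hVint.mono_set (by rw [Set.uIcc_of_le hs₀Icc.1, Set.uIcc_of_le ht]; exact Set.Icc_subset_Icc le_rfl hs₀Icc.2)
  have hV2 : IntervalIntegrable V volume s₀ t :=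
    hVint.mono_set (by rw [Set.uIcc_of_le hs₀t.le, Set.uIcc_of_le ht]; exact Set.Icc_subset_Icc hs₀Icc.1 le_rfl)
  have hdiff : y t - y s₀ = ∫ s in s₀..t, u s := by
    rw [hsol t ⟨ht, le_rfl⟩, hsol s₀ hs₀Icc]
    rw [← intervalIntegral.integral_add_adjacent_intervals hu1 hu2]
    ring
  have hmono : ∫ s in s₀..t, u s ≤ ∫ s in s₀..t, C * V s := by
    apply intervalIntegral.integral_mono_ae_restrict hs₀t.le hu2 (hV2.const_mul C)
    rw [Filter.EventuallyLE, ae_restrict_iff' measurableSet_Icc]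
    have hne : ∀ᵐ (s : ℝ) ∂volume, s ≠ s₀ := by
      rw [MeasureTheory.ae_iff]
      simpa using Real.volume_singleton (a := s₀)
    filter_upwards [hne] with s hs hmem
    have hsIoc : s ∈ Set.Ioc s₀ t := ⟨lt_of_le_of_ne hmem.1 (Ne.symm hs), hmem.2⟩
    exact hbd s ⟨hs₀Icc.1.trans hsIoc.1.le, hsIoc.2⟩ (habove s hsIoc)
  have hext : ∫ s in s₀..t, C * V s ≤ C * ∫ s in (0:ℝ)..t, V s := by
    rw [intervalIntegral.integral_const_mul]
    apply mul_le_mul_of_nonneg_left _ hC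
    rw [← intervalIntegral.integral_add_adjacent_intervals hV1 hV2]
    have : 0 ≤ ∫ s in (0:ℝ)..s₀, V s :=
      intervalIntegral.integral_nonneg hs₀Icc.1 (fun s _ => hVnn s)
    linarith
  have : y t - c ≤ C * ∫ s in (0:ℝ)..t, V s := by
    have := hdiff
    nlinarith [hmono, hext]
  exact max_le this hRHS

/-- Integral Grönwall: a nonnegative continuous function dominated by `K ∫₀ᵗ V` is zero. -/
lemma gronwall_zero {V : ℝ → ℝ} {T K : ℝ} (hT : 0 ≤ T) (hK : 0 ≤ K)
    (hVc : ContinuousOn V (Set.Icc 0 T)) (hVnn : ∀ s, 0 ≤ V s)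
    (hle : ∀ t ∈ Set.Icc (0:ℝ) T, V t ≤ K * ∫ s in (0:ℝ)..t, V s) :
    ∀ t ∈ Set.Icc (0:ℝ) T, V t = 0 := by
  obtain ⟨M, hM⟩ := isCompact_Icc.exists_bound_of_continuousOn hVc
  have hM' : ∀ s ∈ Set.Icc (0:ℝ) T, V s ≤ M := by
    intro s hs; have := hM s hs; rwa [Real.norm_eq_abs, abs_of_nonneg (hVnn s)] at this
  have claim : ∀ k : ℕ, ∀ t ∈ Set.Icc (0:ℝ) T, V t ≤ M * (K^k * t^k / (k.factorial : ℝ)) := by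
    intro k
    induction k with
    | zero => intro t ht; simpa using hM' t ht
    | succ k ih =>
      intro t ht
      have hVi : IntervalIntegrable V volume 0 t := by
        apply ContinuousOn.intervalIntegrable
        rw [Set.uIcc_of_le ht.1]
        exact hVc.mono (Set.Icc_subset_Icc le_rfl ht.2)
      have hgi : IntervalIntegrable (fun s => M * (K^k * s^k / (k.factorial : ℝ))) volume 0 t := by
        apply Continuous.intervalIntegrable; continuity
      have h1 : ∫ s in (0:ℝ)..t, V s ≤ ∫ s in (0:ℝ)..t, M * (K^k * s^k / (k.factorial : ℝ)) :=
        intervalIntegral.integral_mono_on ht.1 hVi hgi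
          (fun s hs => ih s ⟨hs.1, hs.2.trans ht.2⟩)
      have h2 : ∫ s in (0:ℝ)..t, M * (K^k * s^k / (k.factorial : ℝ))
          = M * K^k / (k.factorial : ℝ) * (t^(k+1) / ((k:ℝ)+1)) := by
        have : ∀ s : ℝ, M * (K^k * s^k / (k.factorial : ℝ))
            = (M * K^k / (k.factorial : ℝ)) * s^k := by intro s; ring
        simp_rw [this]
        rw [intervalIntegral.integral_const_mul, integral_pow]
        ring
      have h3 := hle t ht
      have hfac : ((k+1).factorial : ℝ) = ((k:ℝ)+1) * (k.factorial : ℝ) := by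
        rw [Nat.factorial_succ]; push_cast; ring
      have hfacpos : (0:ℝ) < (k.factorial : ℝ) := by positivity
      calc V t ≤ K * ∫ s in (0:ℝ)..t, V s := h3
        _ ≤ K * (M * K^k / (k.factorial : ℝ) * (t^(k+1) / ((k:ℝ)+1))) := by
            apply mul_le_mul_of_nonneg_left _ hK
            rw [h2] at h1; exact h1
        _ = M * (K^(k+1) * t^(k+1) / (((k+1).factorial : ℝ))) := by
            rw [hfac]; field_simp; ring
  intro t ht
  have hlim : Tendsto (fun k : ℕ => M * ((K*t)^k / (k.factorial : ℝ))) atTop (𝓝 0) := by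
    have := (FloorSemiring.tendsto_pow_div_factorial_atTop (K*t)).const_mul M
    simpa using this
  have hub : ∀ k : ℕ, V t ≤ M * ((K*t)^k / (k.factorial : ℝ)) := by
    intro k
    have := claim k t ht
    rw [mul_pow]
    exact this
  have : V t ≤ 0 := ge_of_tendsto' hlim hub
  exact le_antisymm this (hVnn t)

end ARCP


/-- if `S₁, S₂` are nonempty disjoint sets, neither `f`-fraction edge
reachable, and all agents run ARC-P with parameter `f ∈ [0,1/2]` starting from value `a`
on `S₁`, `b` on `S₂` (`a < b`) and values in `[a,b]` elsewhere, then the agents of `S₁`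
stay at `a` and those of `S₂` stay at `b` forever; in particular asymptotic consensus is
not reached. -/
theorem stmt5 {n : ℕ}
    (Nin : Fin n → Finset (Fin n)) (f : ℝ) (hf : f ∈ Set.Icc (0 : ℝ) (1 / 2))
    (S₁ S₂ : Finset (Fin n)) (h₁ : S₁.Nonempty) (h₂ : S₂.Nonempty)
    (hdisj : Disjoint S₁ S₂)
    (hnr₁ : ¬ ARCP.FracEdgeReachable Nin f S₁)
    (hnr₂ : ¬ ARCP.FracEdgeReachable Nin f S₂)
    (a b : ℝ) (hab : a < b)
    (α β : ℝ) (hα : 0 < α) (hαβ : α ≤ β)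
    (w : ℝ → Fin n → Fin n → ℝ)
    (hw : ∀ t : ℝ, ∀ i : Fin n, ∀ j ∈ Nin i, α ≤ w t j i ∧ w t j i ≤ β)
    (x : Fin n → ℝ → ℝ) (R : ℝ → Fin n → Finset (Fin n))
    -- valid ARC-P removal sets (all agents behave normally)
    (hR : ∀ t : ℝ, ∀ i : Fin n, ARCP.IsARCPRemoval (Nin i) (fun j => x j t) (x i t)
      (⌊f * (((Nin i).card : ℝ))⌋₊) (R t i))
    -- Carathéodory solution of the ARC-P dynamics (integral form)
    (hint : ∀ i : Fin n, ∀ t : ℝ, 0 ≤ t → IntervalIntegrable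
      (fun s => ARCP.arcpUpdate (Nin i) (R s i) (fun j => w s j i)
        (fun j => x j s) (x i s)) volume 0 t)
    (hsol : ∀ i : Fin n, ∀ t : ℝ, 0 ≤ t → x i t = x i 0 + ∫ s in (0 : ℝ)..t,
      ARCP.arcpUpdate (Nin i) (R s i) (fun j => w s j i) (fun j => x j s) (x i s))
    -- initial values
    (hinit₁ : ∀ i ∈ S₁, x i 0 = a) (hinit₂ : ∀ i ∈ S₂, x i 0 = b)
    (hinit : ∀ i : Fin n, x i 0 ∈ Set.Icc a b) :
    (∀ t : ℝ, 0 ≤ t → (∀ i ∈ S₁, x i t = a) ∧ (∀ i ∈ S₂, x i t = b)) ∧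
    ¬ ∃ L : ℝ, ∀ i : Fin n, Tendsto (x i) atTop (𝓝 L) := by
  obtain ⟨hf0, hf2⟩ := hf
  have hβ : 0 ≤ β := le_trans hα.le hαβ
  set C : ℝ := β * ((n : ℝ) + 1) with hCdef
  have hC : 0 ≤ C := by positivity
  have hβC : β ≤ C := by nlinarith [Nat.cast_nonneg (α := ℝ) n]
  set u : Fin n → ℝ → ℝ := fun i s => ARCP.arcpUpdate (Nin i) (R s i) (fun j => w s j i)
    (fun j => x j s) (x i s) with hudef
  have hus : ∀ (i : Fin n) (s : ℝ),
      u i s = ∑ j ∈ (Nin i) \ (R s i), w s j i * (x j s - x i s) := fun i s => rfl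
  have hint' : ∀ (i : Fin n) (t : ℝ), 0 ≤ t → IntervalIntegrable (u i) volume 0 t :=
    fun i t ht => hint i t ht
  have hsol' : ∀ (i : Fin n) (t : ℝ), 0 ≤ t →
      x i t = x i 0 + ∫ s in (0:ℝ)..t, u i s := fun i t ht => hsol i t ht
  -- few outside neighbors
  have hout : ∀ (S : Finset (Fin n)), ¬ ARCP.FracEdgeReachable Nin f S →
      ∀ i ∈ S, ((Nin i) \ S).card ≤ ⌊f * (((Nin i).card : ℝ))⌋₊ := by
    intro S hnr i hi
    rw [ARCP.FracEdgeReachable] at hnr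
    push_neg at hnr
    obtain ⟨hA, _⟩ := hnr
    rcases Nat.eq_zero_or_pos (Nin i).card with h0 | hpos
    · have h1 : ((Nin i) \ S).card ≤ (Nin i).card := Finset.card_le_card Finset.sdiff_subset
      omega
    · have h2 := hA i hi hpos
      have hcf := Nat.ceil_le_floor_add_one (f * (((Nin i).card : ℝ)))
      omega
  -- continuity of solutions
  have hcont : ∀ (i : Fin n) (T : ℝ), 0 ≤ T → ContinuousOn (x i) (Set.Icc 0 T) := by
    intro i T hT
    have h1 : IntegrableOn (u i) (Set.uIcc 0 T) volume := by
      rw [Set.uIcc_of_le hT, integrableOn_Icc_iff_integrableOn_Ioc]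
      exact ((hint' i T hT).1)
    have h2 := intervalIntegral.continuousOn_primitive_interval h1
    rw [Set.uIcc_of_le hT] at h2
    exact (continuousOn_const.add h2).congr fun s hs => hsol' i s hs.1
  -- the Lyapunov-type function
  set V : ℝ → ℝ := fun s => (∑ j, max (x j s - b) 0) + (∑ j, max (a - x j s) 0)
    + (∑ j ∈ S₁, max (x j s - a) 0) + (∑ j ∈ S₂, max (b - x j s) 0) with hVdef
  have hVparts : ∀ s : ℝ, (0 ≤ ∑ j, max (x j s - b) 0) ∧ (0 ≤ ∑ j, max (a - x j s) 0)
      ∧ (0 ≤ ∑ j ∈ S₁, max (x j s - a) 0) ∧ (0 ≤ ∑ j ∈ S₂, max (b - x j s) 0) :=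
    fun s => ⟨Finset.sum_nonneg fun j _ => le_max_right _ _,
      Finset.sum_nonneg fun j _ => le_max_right _ _,
      Finset.sum_nonneg fun j _ => le_max_right _ _,
      Finset.sum_nonneg fun j _ => le_max_right _ _⟩
  have hVnn : ∀ s, 0 ≤ V s := by
    intro s
    obtain ⟨h1, h2, h3, h4⟩ := hVparts s
    rw [hVdef]; dsimp only; linarith
  have hV1 : ∀ s, (∑ j, max (x j s - b) 0) ≤ V s := by
    intro s; obtain ⟨h1, h2, h3, h4⟩ := hVparts s; rw [hVdef]; dsimp only; linarith
  have hV2 : ∀ s, (∑ j, max (a - x j s) 0) ≤ V s := by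
    intro s; obtain ⟨h1, h2, h3, h4⟩ := hVparts s; rw [hVdef]; dsimp only; linarith
  have hV3 : ∀ s, (∑ j ∈ S₁, max (x j s - a) 0) ≤ V s := by
    intro s; obtain ⟨h1, h2, h3, h4⟩ := hVparts s; rw [hVdef]; dsimp only; linarith
  have hV4 : ∀ s, (∑ j ∈ S₂, max (b - x j s) 0) ≤ V s := by
    intro s; obtain ⟨h1, h2, h3, h4⟩ := hVparts s; rw [hVdef]; dsimp only; linarith
  have hVcont : ∀ T : ℝ, 0 ≤ T → ContinuousOn V (Set.Icc 0 T) := by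
    intro T hT
    have hx : ∀ i : Fin n, ContinuousOn (x i) (Set.Icc 0 T) := fun i => hcont i T hT
    rw [hVdef]
    apply ContinuousOn.add
    apply ContinuousOn.add
    apply ContinuousOn.add
    · exact continuousOn_finset_sum _ fun j _ => ((hx j).sub continuousOn_const).sup continuousOn_const
    · exact continuousOn_finset_sum _ fun j _ => (continuousOn_const.sub (hx j)).sup continuousOn_const
    · exact continuousOn_finset_sum _ fun j _ => ((hx j).sub continuousOn_const).sup continuousOn_const
    · exact continuousOn_finset_sum _ fun j _ => (continuousOn_const.sub (hx j)).sup continuousOn_const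
  have hVint : ∀ t : ℝ, 0 ≤ t → IntervalIntegrable V volume 0 t := by
    intro t ht
    apply ContinuousOn.intervalIntegrable
    rw [Set.uIcc_of_le ht]
    exact hVcont t ht
  -- weight bounds on kept sets
  have hwb : ∀ (s : ℝ) (i : Fin n), ∀ j ∈ (Nin i) \ (R s i),
      0 ≤ w s j i ∧ w s j i ≤ β := by
    intro s i j hj
    have hjN := (Finset.mem_sdiff.1 hj).1
    exact ⟨hα.le.trans (hw s i j hjN).1, (hw s i j hjN).2⟩
  -- pointwise bounds P1-P4
  have P1 : ∀ (s : ℝ) (i : Fin n), b < x i s → u i s ≤ C * V s := by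
    intro s i hbi
    have h1 : u i s ≤ β * ∑ j, max (x j s - b) 0 := by
      rw [hus]
      exact ARCP.simple_high hβ _ (fun j => x j s) hbi.le _ (hwb s i)
    calc u i s ≤ β * ∑ j, max (x j s - b) 0 := h1
      _ ≤ β * V s := mul_le_mul_of_nonneg_left (hV1 s) hβ
      _ ≤ C * V s := mul_le_mul_of_nonneg_right hβC (hVnn s)
  have P2 : ∀ (s : ℝ) (i : Fin n), x i s < a → -(u i s) ≤ C * V s := by
    intro s i hai
    have hneg : -(u i s) = ∑ j ∈ (Nin i) \ (R s i), w s j i * ((-(x j s)) - (-(x i s))) := by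
      rw [hus, ← Finset.sum_neg_distrib]
      exact Finset.sum_congr rfl fun j _ => by ring
    have h1 : -(u i s) ≤ β * ∑ j, max ((-(x j s)) - (-a)) 0 := by
      rw [hneg]
      exact ARCP.simple_high hβ _ (fun j => -(x j s)) (by linarith) _ (hwb s i)
    have heq : ∀ j, (-(x j s)) - (-a) = a - x j s := fun j => by ring
    simp only [heq] at h1
    calc -(u i s) ≤ β * ∑ j, max (a - x j s) 0 := h1
      _ ≤ β * V s := mul_le_mul_of_nonneg_left (hV2 s) hβ
      _ ≤ C * V s := mul_le_mul_of_nonneg_right hβC (hVnn s)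
  have P3 : ∀ (s : ℝ), ∀ i ∈ S₁, a < x i s → u i s ≤ C * V s := by
    intro s i hi hai
    obtain ⟨Rhi, Rlo, hReq, hhi, hlo⟩ := hR s i
    have hkept : (Nin i) \ (R s i) ⊆ (Nin i) \ Rhi := by
      rw [hReq]
      exact Finset.sdiff_subset_sdiff le_rfl Finset.subset_union_left
    have h1 : u i s ≤ β * ((n : ℝ) + 1) * ∑ r ∈ S₁, max (x r s - a) 0 := by
      rw [hus]
      exact ARCP.key_high hβ hkept (hout S₁ hnr₁ i hi) hai hhi _ (hwb s i)
    calc u i s ≤ C * ∑ r ∈ S₁, max (x r s - a) 0 := h1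
      _ ≤ C * V s := mul_le_mul_of_nonneg_left (hV3 s) hC
  have P4 : ∀ (s : ℝ), ∀ i ∈ S₂, x i s < b → -(u i s) ≤ C * V s := by
    intro s i hi hbi
    obtain ⟨Rhi, Rlo, hReq, hhi, hlo⟩ := hR s i
    have hkept : (Nin i) \ (R s i) ⊆ (Nin i) \ Rlo := by
      rw [hReq]
      exact Finset.sdiff_subset_sdiff le_rfl Finset.subset_union_right
    have hneg : -(u i s) = ∑ j ∈ (Nin i) \ (R s i), w s j i * ((-(x j s)) - (-(x i s))) := by
      rw [hus, ← Finset.sum_neg_distrib]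
      exact Finset.sum_congr rfl fun j _ => by ring
    have h1 : -(u i s) ≤ β * ((n : ℝ) + 1) * ∑ r ∈ S₂, max ((-(x r s)) - (-b)) 0 := by
      rw [hneg]
      exact ARCP.key_high hβ hkept (hout S₂ hnr₂ i hi) (by linarith) hlo.neg _ (hwb s i)
    have heq : ∀ r, (-(x r s)) - (-b) = b - x r s := fun r => by ring
    simp only [heq] at h1
    calc -(u i s) ≤ C * ∑ r ∈ S₂, max (b - x r s) 0 := h1
      _ ≤ C * V s := mul_le_mul_of_nonneg_left (hV4 s) hC
  -- integral inequality
  set K : ℝ := 4 * (n : ℝ) * C with hKdef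
  have hK : 0 ≤ K := by positivity
  have hle : ∀ t : ℝ, 0 ≤ t → V t ≤ K * ∫ s in (0:ℝ)..t, V s := by
    intro t ht
    set I : ℝ := ∫ s in (0:ℝ)..t, V s with hIdef
    have hInn : 0 ≤ I := intervalIntegral.integral_nonneg ht fun s _ => hVnn s
    have hsum : ∀ (s' : Finset (Fin n)) (g : Fin n → ℝ), (∀ i ∈ s', g i ≤ C * I) →
        ∑ i ∈ s', g i ≤ (n : ℝ) * (C * I) := by
      intro s' g hg
      calc ∑ i ∈ s', g i ≤ s'.card • (C * I) := Finset.sum_le_card_nsmul _ _ _ hg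
        _ = (s'.card : ℝ) * (C * I) := nsmul_eq_mul _ _
        _ ≤ (n : ℝ) * (C * I) := by
            apply mul_le_mul_of_nonneg_right _ (mul_nonneg hC hInn)
            exact_mod_cast (Finset.card_le_univ s').trans_eq (by simp)
    have hA : ∀ i : Fin n, max (x i t - b) 0 ≤ C * I :=
      fun i => ARCP.cross ht hC (hcont i t ht) hVnn (hVint t ht) (hint' i t ht)
        (fun s hs => hsol' i s hs.1) (hinit i).2 (fun s _ h => P1 s i h)
    have hB : ∀ i : Fin n, max (a - x i t) 0 ≤ C * I := by
      intro i
      have hcr := ARCP.cross (y := fun s => -(x i s)) (u := fun s => -(u i s)) (c := -a)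
        ht hC ((hcont i t ht).neg) hVnn (hVint t ht) ((hint' i t ht).neg)
        (fun s hs => by
          rw [intervalIntegral.integral_neg]
          have h := hsol' i s hs.1
          linarith)
        (by linarith [(hinit i).1])
        (fun s _ h => P2 s i (by linarith))
      have : (fun s => -(x i s)) t - (-a) = a - x i t := by ring
      rwa [this] at hcr
    have hC₁ : ∀ i ∈ S₁, max (x i t - a) 0 ≤ C * I := by
      intro i hi
      exact ARCP.cross ht hC (hcont i t ht) hVnn (hVint t ht) (hint' i t ht)
        (fun s hs => hsol' i s hs.1) (le_of_eq (hinit₁ i hi)) (fun s _ h => P3 s i hi h)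
    have hC₂ : ∀ i ∈ S₂, max (b - x i t) 0 ≤ C * I := by
      intro i hi
      have hcr := ARCP.cross (y := fun s => -(x i s)) (u := fun s => -(u i s)) (c := -b)
        ht hC ((hcont i t ht).neg) hVnn (hVint t ht) ((hint' i t ht).neg)
        (fun s hs => by
          rw [intervalIntegral.integral_neg]
          have h := hsol' i s hs.1
          linarith)
        (by rw [hinit₂ i hi])
        (fun s _ h => P4 s i hi (by linarith))
      have : (fun s => -(x i s)) t - (-b) = b - x i t := by ring
      rwa [this] at hcr
    have s1 : ∑ j, max (x j t - b) 0 ≤ (n : ℝ) * (C * I) :=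
      hsum _ _ fun i _ => hA i
    have s2 : ∑ j, max (a - x j t) 0 ≤ (n : ℝ) * (C * I) :=
      hsum _ _ fun i _ => hB i
    have s3 : ∑ j ∈ S₁, max (x j t - a) 0 ≤ (n : ℝ) * (C * I) :=
      hsum _ _ fun i hi => hC₁ i hi
    have s4 : ∑ j ∈ S₂, max (b - x j t) 0 ≤ (n : ℝ) * (C * I) :=
      hsum _ _ fun i hi => hC₂ i hi
    have : V t = (∑ j, max (x j t - b) 0) + (∑ j, max (a - x j t) 0)
        + (∑ j ∈ S₁, max (x j t - a) 0) + (∑ j ∈ S₂, max (b - x j t) 0) := rfl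
    rw [this, hKdef]
    nlinarith [hInn, hC]
  -- Gronwall: V vanishes
  have hVzero : ∀ t : ℝ, 0 ≤ t → V t = 0 := by
    intro t ht
    exact ARCP.gronwall_zero ht hK (hVcont t ht) hVnn (fun s hs => hle s hs.1) t ⟨ht, le_rfl⟩
  -- invariance conclusions
  have hmain : ∀ t : ℝ, 0 ≤ t → (∀ i ∈ S₁, x i t = a) ∧ (∀ i ∈ S₂, x i t = b) := by
    intro t ht
    have hz : (∑ j, max (x j t - b) 0) + (∑ j, max (a - x j t) 0)
        + (∑ j ∈ S₁, max (x j t - a) 0) + (∑ j ∈ S₂, max (b - x j t) 0) = 0 := hVzero t ht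
    obtain ⟨q1, q2, q3, q4⟩ := hVparts t
    have e1 : (∑ j, max (x j t - b) 0) = 0 := by linarith
    have e2 : (∑ j, max (a - x j t) 0) = 0 := by linarith
    have e3 : (∑ j ∈ S₁, max (x j t - a) 0) = 0 := by linarith
    have e4 : (∑ j ∈ S₂, max (b - x j t) 0) = 0 := by linarith
    rw [Finset.sum_eq_zero_iff_of_nonneg (fun j _ => le_max_right _ _)] at e1 e2 e3 e4
    constructor
    · intro i hi
      have h1 : x i t - a ≤ 0 := by
        have := e3 i hi
        have h := le_max_left (x i t - a) 0
        linarith [h.trans_eq this]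
      have h2 : a - x i t ≤ 0 := by
        have := e2 i (Finset.mem_univ i)
        have h := le_max_left (a - x i t) 0
        linarith [h.trans_eq this]
      linarith
    · intro i hi
      have h1 : x i t - b ≤ 0 := by
        have := e1 i (Finset.mem_univ i)
        have h := le_max_left (x i t - b) 0
        linarith [h.trans_eq this]
      have h2 : b - x i t ≤ 0 := by
        have := e4 i hi
        have h := le_max_left (b - x i t) 0
        linarith [h.trans_eq this]
      linarith
  refine ⟨hmain, ?_⟩
  rintro ⟨L, hL⟩
  obtain ⟨i₁, hi₁⟩ := h₁
  obtain ⟨i₂, hi₂⟩ := h₂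
  have ha : Tendsto (x i₁) atTop (𝓝 a) := by
    apply Tendsto.congr' _ tendsto_const_nhds
    filter_upwards [eventually_ge_atTop (0:ℝ)] with t ht
    exact ((hmain t ht).1 i₁ hi₁).symm
  have hb : Tendsto (x i₂) atTop (𝓝 b) := by
    apply Tendsto.congr' _ tendsto_const_nhds
    filter_upwards [eventually_ge_atTop (0:ℝ)] with t ht
    exact ((hmain t ht).2 i₂ hi₂).symm
  have hLa : L = a := tendsto_nhds_unique (hL i₁) ha
  have hLb : L = b := tendsto_nhds_unique (hL i₂) hb
  linarith
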